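/- Let 0 < q < 1 and γ ≥ 0. Let τ₁, τ₂, … be i.i.d. random variables with the exponential distribution of rate 1, and let N take values in {1, 2, 3, …} with P(N = m) = q^{m−1}(1−q), independent of (τ_k). Set α = max(γ, τ₁) + Σ_{k=2}^{N} τ_k (the sum being empty when N = 1). Then E[α²] = γ² + 2(γ+1)e^{−γ} + 2(γ + e^{−γ})·q/(1−q) + 2q/(1−q)². -/

import Mathlib

open MeasureTheory ProbabilityTheory

open Real Set Filter Topology
open scoped ENNReal NNReal


lemma aux_tendsto1 : Tendsto (fun t : ℝ => -((t + 1) * Real.exp (-t))) atTop (𝓝 0) := by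
  have h := (Real.tendsto_pow_mul_exp_neg_atTop_nhds_zero 1).add
    (Real.tendsto_pow_mul_exp_neg_atTop_nhds_zero 0)
  have h2 := h.neg
  simp only [pow_one, pow_zero, one_mul, add_zero, neg_zero] at h2
  convert h2 using 2 with t
  ring

lemma aux_tendsto2 : Tendsto (fun t : ℝ => -((t ^ 2 + 2 * t + 2) * Real.exp (-t))) atTop (𝓝 0) := by
  have h := ((Real.tendsto_pow_mul_exp_neg_atTop_nhds_zero 2).add
    ((Real.tendsto_pow_mul_exp_neg_atTop_nhds_zero 1).const_mul 2)).add
    ((Real.tendsto_pow_mul_exp_neg_atTop_nhds_zero 0).const_mul 2)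
  have h2 := h.neg
  simp only [pow_one, pow_zero, one_mul, mul_zero, add_zero, mul_one, neg_zero, zero_add] at h2
  convert h2 using 2 with t
  ring

lemma aux_deriv1 (x : ℝ) :
    HasDerivAt (fun t : ℝ => -((t + 1) * Real.exp (-t))) (x * Real.exp (-x)) x := by
  have he : HasDerivAt (fun t : ℝ => Real.exp (-t)) (-Real.exp (-x)) x := by
    simpa [Function.comp_def] using (Real.hasDerivAt_exp (-x)).comp x (hasDerivAt_neg x)
  have h := (((hasDerivAt_id x).add_const 1).mul he).neg
  exact h.congr_deriv (by simp only [id_eq]; ring)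

lemma aux_deriv2 (x : ℝ) :
    HasDerivAt (fun t : ℝ => -((t ^ 2 + 2 * t + 2) * Real.exp (-t))) (x ^ 2 * Real.exp (-x)) x := by
  have he : HasDerivAt (fun t : ℝ => Real.exp (-t)) (-Real.exp (-x)) x := by
    simpa [Function.comp_def] using (Real.hasDerivAt_exp (-x)).comp x (hasDerivAt_neg x)
  have hp : HasDerivAt (fun t : ℝ => t ^ 2 + 2 * t + 2) (2 * x + 2) x := by
    have := (((hasDerivAt_pow 2 x)).add ((hasDerivAt_id x).const_mul 2)).add_const 2
    simpa [pow_one] using this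
  have h := (hp.mul he).neg
  exact h.congr_deriv (by ring)

lemma int_Ioi1 {a : ℝ} (ha : 0 ≤ a) :
    ∫ t in Ioi a, t * Real.exp (-t) = (a + 1) * Real.exp (-a) := by
  have := integral_Ioi_of_hasDerivAt_of_nonneg' (g := fun t : ℝ => -((t + 1) * Real.exp (-t)))
    (g' := fun t => t * Real.exp (-t)) (a := a) (fun x _ => aux_deriv1 x)
    (fun x hx => mul_nonneg (le_of_lt (lt_of_le_of_lt ha hx)) (Real.exp_pos _).le) aux_tendsto1
  rw [this]; ring

lemma intOn_Ioi1 {a : ℝ} (ha : 0 ≤ a) :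
    IntegrableOn (fun t => t * Real.exp (-t)) (Ioi a) := by
  exact integrableOn_Ioi_deriv_of_nonneg' (fun x _ => aux_deriv1 x)
    (fun x hx => mul_nonneg (le_of_lt (lt_of_le_of_lt ha hx)) (Real.exp_pos _).le) aux_tendsto1

lemma int_Ioi2 {a : ℝ} (ha : 0 ≤ a) :
    ∫ t in Ioi a, t ^ 2 * Real.exp (-t) = (a ^ 2 + 2 * a + 2) * Real.exp (-a) := by
  have := integral_Ioi_of_hasDerivAt_of_nonneg'
    (g := fun t : ℝ => -((t ^ 2 + 2 * t + 2) * Real.exp (-t)))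
    (g' := fun t => t ^ 2 * Real.exp (-t)) (a := a) (fun x _ => aux_deriv2 x)
    (fun x hx => mul_nonneg (sq_nonneg _) (Real.exp_pos _).le) aux_tendsto2
  rw [this]; ring

lemma intOn_Ioi2 {a : ℝ} (ha : 0 ≤ a) :
    IntegrableOn (fun t => t ^ 2 * Real.exp (-t)) (Ioi a) := by
  exact integrableOn_Ioi_deriv_of_nonneg' (fun x _ => aux_deriv2 x)
    (fun x hx => mul_nonneg (sq_nonneg _) (Real.exp_pos _).le) aux_tendsto2

lemma int_Ioc_exp {γ : ℝ} (hγ : 0 ≤ γ) :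
    ∫ t in Ioc 0 γ, Real.exp (-t) = 1 - Real.exp (-γ) := by
  rw [← intervalIntegral.integral_of_le hγ]
  have : ∀ t : ℝ, Real.exp (-t) = Real.exp (-t) := fun _ => rfl
  rw [intervalIntegral.integral_comp_neg (fun t => Real.exp t)]
  simp [integral_exp]

/-- lintegral of ofReal∘f against expMeasure 1 via real integral on Ioi 0. -/
lemma exp_lintegral_eq (f : ℝ → ℝ) (hf : Measurable f) (hf0 : ∀ t ∈ Ioi (0:ℝ), 0 ≤ f t)
    (hI : IntegrableOn (fun t => f t * Real.exp (-t)) (Ioi 0)) :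
    ∫⁻ t, ENNReal.ofReal (f t) ∂(expMeasure 1)
      = ENNReal.ofReal (∫ t in Ioi 0, f t * Real.exp (-t)) := by
  have hmf : Measurable fun t => ENNReal.ofReal (f t) := ENNReal.measurable_ofReal.comp hf
  set F : ℝ → ℝ≥0∞ := fun t => exponentialPDF 1 t * ENNReal.ofReal (f t) with hF
  have step1 : ∫⁻ t, ENNReal.ofReal (f t) ∂(expMeasure 1) = ∫⁻ t, F t ∂volume := by
    rw [show expMeasure 1 = volume.withDensity (exponentialPDF 1) from rfl,
      lintegral_withDensity_eq_lintegral_mul _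
        (show Measurable (exponentialPDF 1) from (measurable_exponentialPDFReal 1).ennreal_ofReal)
        hmf]
    rfl
  have hzero : ∫⁻ t in (Ioi (0:ℝ))ᶜ, F t ∂volume = 0 := by
    rw [compl_Ioi]
    have h1 : ∫⁻ t in Iic (0:ℝ), F t ∂volume = ∫⁻ t in Iio (0:ℝ), F t ∂volume :=
      setLIntegral_congr (Iio_ae_eq_Iic (a := (0:ℝ))).symm
    rw [h1, setLIntegral_congr_fun (f := F) (g := fun _ => (0:ℝ≥0∞)) measurableSet_Iio
      (fun t (ht : t < 0) => by simp [hF, exponentialPDF_of_neg ht])]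
    simp
  have step2 : ∫⁻ t, F t ∂volume = ∫⁻ t in Ioi (0:ℝ), F t ∂volume := by
    rw [← lintegral_add_compl (f := F) (μ := volume)
      (measurableSet_Ioi : MeasurableSet (Ioi (0:ℝ))), hzero, add_zero]
  have heq : ∫⁻ t in Ioi (0:ℝ), F t ∂volume
      = ∫⁻ t in Ioi (0:ℝ), ENNReal.ofReal (f t * Real.exp (-t)) ∂volume := by
    refine setLIntegral_congr_fun measurableSet_Ioi (fun t ht => ?_)
    have ht' : (0:ℝ) ≤ t := le_of_lt ht
    simp only [hF, exponentialPDF_of_nonneg ht', one_mul]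
    rw [← ENNReal.ofReal_mul (by positivity)]
    ring_nf
  rw [step1, step2, heq, ← ofReal_integral_eq_lintegral_ofReal hI
    (ae_restrict_of_forall_mem measurableSet_Ioi fun t ht =>
      mul_nonneg (hf0 t ht) (Real.exp_pos _).le)]

lemma E_one : ∫⁻ t, ENNReal.ofReal t ∂(expMeasure 1) = 1 := by
  rw [exp_lintegral_eq (fun t => t) measurable_id (fun t ht => le_of_lt ht) (intOn_Ioi1 le_rfl)]
  rw [int_Ioi1 le_rfl]
  norm_num

lemma E_two : ∫⁻ t, ENNReal.ofReal (t ^ 2) ∂(expMeasure 1) = 2 := by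
  rw [exp_lintegral_eq (fun t => t ^ 2) (measurable_id.pow_const 2)
    (fun t _ => sq_nonneg t) (intOn_Ioi2 le_rfl)]
  rw [int_Ioi2 le_rfl]
  norm_num

section Max
variable {γ : ℝ}

lemma intOn_max1 (hγ : 0 ≤ γ) : IntegrableOn (fun t => max γ t * Real.exp (-t)) (Ioi 0) := by
  rw [← Ioc_union_Ioi_eq_Ioi hγ]
  refine IntegrableOn.union ?_ ?_
  · exact ((continuous_const.max continuous_id).mul
      (Real.continuous_exp.comp continuous_neg)).integrableOn_Ioc
  · exact (intOn_Ioi1 hγ).congr_fun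
      (fun t (ht : t ∈ Ioi γ) => by rw [max_eq_right (le_of_lt ht)]) measurableSet_Ioi

lemma int_max1 (hγ : 0 ≤ γ) : ∫ t in Ioi 0, max γ t * Real.exp (-t) = γ + Real.exp (-γ) := by
  rw [← Ioc_union_Ioi_eq_Ioi hγ, setIntegral_union (Ioc_disjoint_Ioi le_rfl) measurableSet_Ioi
    (intOn_max1 hγ |>.mono_set (by rw [← Ioc_union_Ioi_eq_Ioi hγ]; exact subset_union_left))
    (intOn_max1 hγ |>.mono_set (by rw [← Ioc_union_Ioi_eq_Ioi hγ]; exact subset_union_right))]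
  have h1 : ∫ t in Ioc 0 γ, max γ t * Real.exp (-t) = γ * (1 - Real.exp (-γ)) := by
    rw [setIntegral_congr_fun measurableSet_Ioc
      (fun t (ht : t ∈ Ioc 0 γ) => by rw [max_eq_left ht.2])]
    rw [integral_const_mul, int_Ioc_exp hγ]
  have h2 : ∫ t in Ioi γ, max γ t * Real.exp (-t) = (γ + 1) * Real.exp (-γ) := by
    rw [setIntegral_congr_fun measurableSet_Ioi
      (fun t (ht : t ∈ Ioi γ) => by rw [max_eq_right (le_of_lt ht)]), int_Ioi1 hγ]
  rw [h1, h2]; ring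

lemma intOn_max2 (hγ : 0 ≤ γ) : IntegrableOn (fun t => (max γ t) ^ 2 * Real.exp (-t)) (Ioi 0) := by
  rw [← Ioc_union_Ioi_eq_Ioi hγ]
  refine IntegrableOn.union ?_ ?_
  · exact (((continuous_const.max continuous_id).pow 2).mul
      (Real.continuous_exp.comp continuous_neg)).integrableOn_Ioc
  · exact (intOn_Ioi2 hγ).congr_fun
      (fun t (ht : t ∈ Ioi γ) => by rw [max_eq_right (le_of_lt ht)]) measurableSet_Ioi

lemma int_max2 (hγ : 0 ≤ γ) : ∫ t in Ioi 0, (max γ t) ^ 2 * Real.exp (-t)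
    = γ ^ 2 + 2 * (γ + 1) * Real.exp (-γ) := by
  rw [← Ioc_union_Ioi_eq_Ioi hγ, setIntegral_union (Ioc_disjoint_Ioi le_rfl) measurableSet_Ioi
    (intOn_max2 hγ |>.mono_set (by rw [← Ioc_union_Ioi_eq_Ioi hγ]; exact subset_union_left))
    (intOn_max2 hγ |>.mono_set (by rw [← Ioc_union_Ioi_eq_Ioi hγ]; exact subset_union_right))]
  have h1 : ∫ t in Ioc 0 γ, (max γ t) ^ 2 * Real.exp (-t) = γ ^ 2 * (1 - Real.exp (-γ)) := by
    rw [setIntegral_congr_fun measurableSet_Ioc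
      (fun t (ht : t ∈ Ioc 0 γ) => by rw [max_eq_left ht.2])]
    rw [integral_const_mul, int_Ioc_exp hγ]
  have h2 : ∫ t in Ioi γ, (max γ t) ^ 2 * Real.exp (-t)
      = (γ ^ 2 + 2 * γ + 2) * Real.exp (-γ) := by
    rw [setIntegral_congr_fun measurableSet_Ioi
      (fun t (ht : t ∈ Ioi γ) => by rw [max_eq_right (le_of_lt ht)]), int_Ioi2 hγ]
  rw [h1, h2]; ring

lemma E_max1 (hγ : 0 ≤ γ) : ∫⁻ t, ENNReal.ofReal (max γ t) ∂(expMeasure 1)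
    = ENNReal.ofReal (γ + Real.exp (-γ)) := by
  rw [exp_lintegral_eq (fun t => max γ t) (by fun_prop)
    (fun t _ => le_max_of_le_left hγ) (intOn_max1 hγ), int_max1 hγ]

lemma E_max2 (hγ : 0 ≤ γ) : ∫⁻ t, ENNReal.ofReal ((max γ t) ^ 2) ∂(expMeasure 1)
    = ENNReal.ofReal (γ ^ 2 + 2 * (γ + 1) * Real.exp (-γ)) := by
  rw [exp_lintegral_eq (fun t => (max γ t) ^ 2) (by fun_prop)
    (fun t _ => sq_nonneg _) (intOn_max2 hγ), int_max2 hγ]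

end Max


/-- Threshold-greedy epoch length (second moment): if `τ₁, τ₂, …` are i.i.d. exponential of
rate 1, `N` is geometric on `{1,2,…}` with `P(N = m) = q^{m−1}(1−q)`, independent of the sequence,
and `α = max(γ, τ₁) + Σ_{k=2}^N τ_k`, then
`E[α²] = γ² + 2(γ+1)e^{−γ} + 2(γ + e^{−γ})·q/(1−q) + 2q/(1−q)²`. -/
theorem stmt12 {Ω : Type*} {mΩ : MeasurableSpace Ω} (μ : Measure Ω) [IsProbabilityMeasure μ]
    (q γ : ℝ) (hq0 : 0 < q) (hq1 : q < 1) (hγ : 0 ≤ γ)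
    (τ : ℕ → Ω → ℝ) (hmeas : ∀ k, Measurable (τ k))
    (hdist : ∀ k, μ.map (τ k) = expMeasure 1)
    (hindep : iIndepFun τ μ)
    (N : Ω → ℕ) (hNmeas : Measurable N)
    (hN : ∀ m : ℕ, 1 ≤ m → μ {ω | N ω = m} = ENNReal.ofReal (q ^ (m - 1) * (1 - q)))
    (hNindep : IndepFun N (fun ω => fun k => τ k ω) μ) :
    ∫ ω, (max γ (τ 0 ω) + ∑ k ∈ Finset.Ico 1 (N ω), τ k ω) ^ 2 ∂μ
      = γ ^ 2 + 2 * (γ + 1) * Real.exp (-γ)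
        + 2 * (γ + Real.exp (-γ)) * q / (1 - q) + 2 * q / (1 - q) ^ 2 := by
  have h1q : (0:ℝ) < 1 - q := by linarith
  -- notation
  set M1 : ℝ := γ + Real.exp (-γ) with hM1
  set M2 : ℝ := γ ^ 2 + 2 * (γ + 1) * Real.exp (-γ) with hM2
  have hM1nn : 0 ≤ M1 := by positivity
  have hM2nn : 0 ≤ M2 := by positivity
  set X : Ω → ℝ := fun ω => max γ (τ 0 ω) with hX
  set T : ℕ → Ω → ℝ := fun m ω => ∑ k ∈ Finset.Ico 1 m, τ k ω with hT
  have mX : Measurable X := measurable_const.max (hmeas 0)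
  have mXof : Measurable fun ω => ENNReal.ofReal (X ω) :=
    show Measurable fun ω => ENNReal.ofReal (X ω) from ENNReal.measurable_ofReal.comp mX
  have mτof : ∀ k, Measurable fun ω => ENNReal.ofReal (τ k ω) := fun k =>
    show Measurable fun ω => ENNReal.ofReal (τ k ω) from ENNReal.measurable_ofReal.comp (hmeas k)
  have mT : ∀ m, Measurable (T m) := fun m => Finset.measurable_sum _ fun k _ => hmeas k
  -- τ is a.e. nonneg
  have hτae : ∀ k, ∀ᵐ ω ∂μ, 0 ≤ τ k ω := by
    intro k
    rw [ae_iff]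
    have : {ω | ¬ 0 ≤ τ k ω} = τ k ⁻¹' (Iio 0) := by ext ω; simp [not_le]
    rw [this, ← Measure.map_apply (hmeas k) measurableSet_Iio, hdist k]
    rw [show expMeasure 1 = volume.withDensity (exponentialPDF 1) from rfl,
      withDensity_apply _ measurableSet_Iio]
    exact lintegral_exponentialPDF_of_nonpos le_rfl
  have hpos : ∀ᵐ ω ∂μ, ∀ k, 0 ≤ τ k ω := ae_all_iff.2 hτae
  -- lintegral transfers
  have Lg : ∀ (k : ℕ) (g : ℝ → ℝ≥0∞), Measurable g →
      ∫⁻ ω, g (τ k ω) ∂μ = ∫⁻ t, g t ∂(expMeasure 1) := by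
    intro k g hg
    rw [← hdist k, lintegral_map hg (hmeas k)]
  have Lτ : ∀ k, ∫⁻ ω, ENNReal.ofReal (τ k ω) ∂μ = 1 := fun k => by
    rw [Lg k _ ENNReal.measurable_ofReal, E_one]
  have Lτ2 : ∀ k, ∫⁻ ω, ENNReal.ofReal (τ k ω ^ 2) ∂μ = 2 := fun k => by
    rw [Lg k (fun t => ENNReal.ofReal (t ^ 2)) (by fun_prop), E_two]
  have LX : ∫⁻ ω, ENNReal.ofReal (X ω) ∂μ = ENNReal.ofReal M1 := by
    rw [show (fun ω => ENNReal.ofReal (X ω)) = fun ω => (fun t => ENNReal.ofReal (max γ t)) (τ 0 ω)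
      from rfl, Lg 0 (fun t => ENNReal.ofReal (max γ t)) (by fun_prop), E_max1 hγ]
  have LX2 : ∫⁻ ω, ENNReal.ofReal (X ω ^ 2) ∂μ = ENNReal.ofReal M2 := by
    rw [show (fun ω => ENNReal.ofReal (X ω ^ 2))
        = fun ω => (fun t => ENNReal.ofReal ((max γ t) ^ 2)) (τ 0 ω) from rfl,
      Lg 0 (fun t => ENNReal.ofReal ((max γ t) ^ 2)) (by fun_prop), E_max2 hγ]
  -- independent products
  have hXτ : ∀ k : ℕ, k ≠ 0 →
      ∫⁻ ω, ENNReal.ofReal (X ω) * ENNReal.ofReal (τ k ω) ∂μ = ENNReal.ofReal M1 := by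
    intro k hk
    have hind : IndepFun (fun ω => ENNReal.ofReal (X ω)) (fun ω => ENNReal.ofReal (τ k ω)) μ :=
      (hindep.indepFun (Ne.symm hk)).comp
        (show Measurable fun t : ℝ => ENNReal.ofReal (max γ t) by fun_prop)
        ENNReal.measurable_ofReal
    rw [lintegral_mul_eq_lintegral_mul_lintegral_of_indepFun''
      mXof.aemeasurable (mτof k).aemeasurable hind, LX, Lτ, mul_one]
  have hττ : ∀ j k : ℕ, j ≠ k →
      ∫⁻ ω, ENNReal.ofReal (τ j ω) * ENNReal.ofReal (τ k ω) ∂μ = 1 := by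
    intro j k hjk
    have hind : IndepFun (fun ω => ENNReal.ofReal (τ j ω)) (fun ω => ENNReal.ofReal (τ k ω)) μ :=
      (hindep.indepFun hjk).comp ENNReal.measurable_ofReal ENNReal.measurable_ofReal
    rw [lintegral_mul_eq_lintegral_mul_lintegral_of_indepFun''
      (mτof j).aemeasurable (mτof k).aemeasurable hind, Lτ, Lτ, mul_one]
  have hττ' : ∀ j : ℕ, ∫⁻ ω, ENNReal.ofReal (τ j ω) * ENNReal.ofReal (τ j ω) ∂μ = 2 := by
    intro j
    have hcongr : (fun ω => ENNReal.ofReal (τ j ω) * ENNReal.ofReal (τ j ω))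
        =ᵐ[μ] fun ω => ENNReal.ofReal (τ j ω ^ 2) := by
      filter_upwards [hτae j] with ω hω
      rw [← ENNReal.ofReal_mul hω, sq]
    rw [lintegral_congr_ae hcongr, Lτ2]
  -- per-m second moment
  have Jval : ∀ m : ℕ, ∫⁻ ω, ENNReal.ofReal ((X ω + T m ω) ^ 2) ∂μ
      = ENNReal.ofReal M2 + ((Finset.Ico 1 m).card : ℝ≥0∞) * (2 * ENNReal.ofReal M1)
        + ((Finset.Ico 1 m).card : ℝ≥0∞) * (((Finset.Ico 1 m).card : ℝ≥0∞) + 1) := by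
    intro m
    set I := Finset.Ico 1 m with hI
    have hcongr : (fun ω => ENNReal.ofReal ((X ω + T m ω) ^ 2)) =ᵐ[μ]
        fun ω => ENNReal.ofReal (X ω ^ 2)
          + (∑ k ∈ I, 2 * (ENNReal.ofReal (X ω) * ENNReal.ofReal (τ k ω)))
          + ∑ j ∈ I, ∑ k ∈ I, ENNReal.ofReal (τ j ω) * ENNReal.ofReal (τ k ω) := by
      filter_upwards [hpos] with ω hω
      have hXnn : 0 ≤ X ω := le_trans hγ (le_max_left _ _)
      have hreal : (X ω + T m ω) ^ 2 = X ω ^ 2 + (∑ k ∈ I, 2 * (X ω * τ k ω))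
          + ∑ j ∈ I, ∑ k ∈ I, τ j ω * τ k ω := by
        have h1 : ∑ k ∈ I, 2 * (X ω * τ k ω) = 2 * (X ω * T m ω) := by
          rw [hT]; simp only [← Finset.mul_sum]; rfl
        have h2 : ∑ j ∈ I, ∑ k ∈ I, τ j ω * τ k ω = T m ω * T m ω := by
          rw [hT]; rw [Finset.sum_mul_sum]
        rw [h1, h2]; ring
      rw [hreal]
      rw [ENNReal.ofReal_add (add_nonneg (sq_nonneg _) (Finset.sum_nonneg fun k _ =>
          mul_nonneg (by norm_num) (mul_nonneg hXnn (hω k)))) (Finset.sum_nonneg fun j _ =>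
          Finset.sum_nonneg fun k _ => mul_nonneg (hω j) (hω k)),
        ENNReal.ofReal_add (sq_nonneg _) (Finset.sum_nonneg fun k _ =>
          mul_nonneg (by norm_num) (mul_nonneg hXnn (hω k))),
        ENNReal.ofReal_sum_of_nonneg (fun k _ =>
          mul_nonneg (by norm_num) (mul_nonneg hXnn (hω k))),
        ENNReal.ofReal_sum_of_nonneg (fun j _ => Finset.sum_nonneg fun k _ =>
          mul_nonneg (hω j) (hω k))]
      congr 1
      · congr 1
        refine Finset.sum_congr rfl fun k _ => ?_
        rw [ENNReal.ofReal_mul (by norm_num), ENNReal.ofReal_mul hXnn, ENNReal.ofReal_ofNat]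
      · refine Finset.sum_congr rfl fun j _ => ?_
        rw [ENNReal.ofReal_sum_of_nonneg (fun k _ => mul_nonneg (hω j) (hω k))]
        exact Finset.sum_congr rfl fun k _ => ENNReal.ofReal_mul (hω j)
    rw [lintegral_congr_ae hcongr]
    have m2meas : Measurable fun ω => ENNReal.ofReal (X ω ^ 2) := by fun_prop
    have mcross : Measurable fun ω =>
        ∑ k ∈ I, 2 * (ENNReal.ofReal (X ω) * ENNReal.ofReal (τ k ω)) :=
      Finset.measurable_sum _ fun k _ => measurable_const.mul (mXof.mul (mτof k))
    have msq : Measurable fun ω =>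
        ∑ j ∈ I, ∑ k ∈ I, ENNReal.ofReal (τ j ω) * ENNReal.ofReal (τ k ω) :=
      Finset.measurable_sum _ fun j _ => Finset.measurable_sum _ fun k _ =>
        (mτof j).mul (mτof k)
    rw [lintegral_add_right _ msq, lintegral_add_right _ mcross, LX2]
    congr 1
    · congr 1
      rw [lintegral_finset_sum' I (f := fun k ω => 2 * (ENNReal.ofReal (X ω) * ENNReal.ofReal (τ k ω))) fun k _ =>
        (measurable_const.mul (mXof.mul (mτof k))).aemeasurable]
      have : ∀ k ∈ I, ∫⁻ ω, 2 * (ENNReal.ofReal (X ω) * ENNReal.ofReal (τ k ω)) ∂μ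
          = 2 * ENNReal.ofReal M1 := by
        intro k hk
        have hk0 : k ≠ 0 := by
          rw [hI, Finset.mem_Ico] at hk; omega
        rw [lintegral_const_mul' 2 _ (by norm_num), hXτ k hk0]
      rw [Finset.sum_congr rfl this, Finset.sum_const, nsmul_eq_mul]
    · rw [lintegral_finset_sum' I (f := fun j ω => ∑ k ∈ I, ENNReal.ofReal (τ j ω) * ENNReal.ofReal (τ k ω)) fun j _ => (Finset.measurable_sum _ fun k _ =>
        (mτof j).mul (mτof k)).aemeasurable]
      have hinner : ∀ j ∈ I, ∫⁻ ω, ∑ k ∈ I, ENNReal.ofReal (τ j ω) * ENNReal.ofReal (τ k ω) ∂μ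
          = (I.card : ℝ≥0∞) + 1 := by
        intro j hj
        rw [lintegral_finset_sum' I (f := fun k ω => ENNReal.ofReal (τ j ω) * ENNReal.ofReal (τ k ω)) fun k _ => ((mτof j).mul (mτof k)).aemeasurable]
        have : ∀ k ∈ I, ∫⁻ ω, ENNReal.ofReal (τ j ω) * ENNReal.ofReal (τ k ω) ∂μ
            = 1 + if k = j then 1 else 0 := by
          intro k _
          by_cases hkj : k = j
          · subst hkj; rw [hττ' k]; norm_num
          · rw [hττ j k (Ne.symm hkj)]; simp [hkj]
        rw [Finset.sum_congr rfl this, Finset.sum_add_distrib, Finset.sum_const, nsmul_eq_mul,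
          Finset.sum_ite_eq' I j (fun _ => (1:ℝ≥0∞)), if_pos hj, mul_one]
      rw [Finset.sum_congr rfl hinner, Finset.sum_const, nsmul_eq_mul]
  -- partition
  set s : ℕ → Set Ω := fun m => N ⁻¹' {m} with hsdef
  have hsm : ∀ m, MeasurableSet (s m) := fun m => hNmeas (measurableSet_singleton m)
  have hmem : ∀ m ω, ω ∈ s m ↔ N ω = m := fun m ω => Iff.rfl
  have hdisj : Pairwise (Function.onFun Disjoint s) := by
    intro i j hij
    rw [Function.onFun, Set.disjoint_left]
    rintro ω hi hj
    exact hij ((hmem i ω).1 hi ▸ (hmem j ω).1 hj)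
  have hunion : (⋃ m, s m) = univ := by
    ext ω; simp [hsdef]
  have mA : Measurable fun ω => X ω + T (N ω) ω := by
    have hTm : Measurable fun p : Ω × ℕ => T p.2 p.1 :=
      measurable_from_prod_countable_left fun m => mT m
    exact mX.add (hTm.comp (measurable_id.prodMk hNmeas))
  -- piecewise independence
  have hpiece : ∀ m : ℕ, ∫⁻ ω in s m, ENNReal.ofReal ((X ω + T (N ω) ω) ^ 2) ∂μ
      = μ (s m) * ∫⁻ ω, ENNReal.ofReal ((X ω + T m ω) ^ 2) ∂μ := by
    intro m
    have hcg : ∫⁻ ω in s m, ENNReal.ofReal ((X ω + T (N ω) ω) ^ 2) ∂μ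
        = ∫⁻ ω in s m, ENNReal.ofReal ((X ω + T m ω) ^ 2) ∂μ :=
      setLIntegral_congr_fun (hsm m) (fun ω hω => by
        rw [(hmem m ω).1 hω])
    rw [hcg, ← lintegral_indicator (hsm m)]
    have hφ : Measurable fun n : ℕ => if n = m then (1:ℝ≥0∞) else 0 :=
      measurable_from_top
    have hΦmeas : Measurable fun v : ℕ → ℝ =>
        ENNReal.ofReal ((max γ (v 0) + ∑ k ∈ Finset.Ico 1 m, v k) ^ 2) := by
      apply ENNReal.measurable_ofReal.comp
      exact ((measurable_const.max (measurable_pi_apply 0)).add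
        (Finset.measurable_sum _ fun k _ => measurable_pi_apply k)).pow_const 2
    have hind_eq : ∀ ω, (s m).indicator (fun ω => ENNReal.ofReal ((X ω + T m ω) ^ 2)) ω
        = (if N ω = m then (1:ℝ≥0∞) else 0) * ENNReal.ofReal ((X ω + T m ω) ^ 2) := by
      intro ω
      by_cases hω : N ω = m
      · rw [Set.indicator_of_mem ((hmem m ω).2 hω), if_pos hω, one_mul]
      · rw [Set.indicator_of_notMem (fun hc => hω ((hmem m ω).1 hc)), if_neg hω, zero_mul]
    rw [lintegral_congr hind_eq]
    have hIndep2 : IndepFun (fun ω => if N ω = m then (1:ℝ≥0∞) else 0)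
        (fun ω => ENNReal.ofReal ((X ω + T m ω) ^ 2)) μ := by
      have := hNindep.comp hφ hΦmeas
      exact this
    rw [lintegral_mul_eq_lintegral_mul_lintegral_of_indepFun''
      (show Measurable fun ω => if N ω = m then (1:ℝ≥0∞) else 0 from
        hφ.comp hNmeas).aemeasurable
      (show Measurable fun ω => ENNReal.ofReal ((X ω + T m ω) ^ 2) from
        ENNReal.measurable_ofReal.comp ((mX.add (mT m)).pow_const 2)).aemeasurable hIndep2]
    congr 1
    have hindic : (fun ω => if N ω = m then (1:ℝ≥0∞) else 0)
        = (s m).indicator (fun _ => 1) := by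
      funext ω
      by_cases hω : N ω = m
      · rw [if_pos hω, Set.indicator_of_mem ((hmem m ω).2 hω)]
      · rw [if_neg hω, Set.indicator_of_notMem (fun hc => hω ((hmem m ω).1 hc))]
    rw [hindic]
    exact lintegral_indicator_one (hsm m)
  have hL : ∫⁻ ω, ENNReal.ofReal ((X ω + T (N ω) ω) ^ 2) ∂μ
      = ∑' m : ℕ, μ (s m) * ∫⁻ ω, ENNReal.ofReal ((X ω + T m ω) ^ 2) ∂μ := by
    rw [← setLIntegral_univ, ← hunion, lintegral_iUnion hsm hdisj]
    exact tsum_congr hpiece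
  -- measure values
  have hμs : ∀ n : ℕ, μ (s (n+1)) = ENNReal.ofReal (q ^ n * (1 - q)) := by
    intro n
    have h := hN (n+1) (by omega)
    have : s (n+1) = {ω | N ω = n+1} := rfl
    rw [this, h]
    norm_num
  have hsummable : Summable fun n : ℕ => q ^ n * (1 - q) :=
    (summable_geometric_of_lt_one hq0.le hq1).mul_right _
  have hUnion1 : μ (⋃ n, s (n+1)) = 1 := by
    rw [measure_iUnion (f := fun n : ℕ => s (n+1)) (fun i j hij => hdisj (show i + 1 ≠ j + 1 by omega))
      (fun n => hsm _)]
    rw [tsum_congr hμs, ← ENNReal.ofReal_tsum_of_nonneg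
      (fun n => mul_nonneg (by positivity) h1q.le) hsummable]
    rw [tsum_mul_right, tsum_geometric_of_lt_one hq0.le hq1]
    rw [inv_mul_cancel₀ (ne_of_gt h1q)]
    exact ENNReal.ofReal_one
  have hs0 : μ (s 0) = 0 := by
    have hsub : s 0 ⊆ (⋃ n, s (n+1))ᶜ := by
      intro ω hω
      simp only [Set.mem_compl_iff, Set.mem_iUnion, not_exists]
      intro n hc
      have h0 : N ω = 0 := (hmem 0 ω).1 hω
      have h1 : N ω = n + 1 := (hmem (n+1) ω).1 hc
      omega
    refine measure_mono_null hsub ?_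
    rw [measure_compl (MeasurableSet.iUnion fun n => hsm _) (measure_ne_top μ _), hUnion1]
    simp
  -- real geometric series
  have hq' : ‖q‖ < 1 := by rw [Real.norm_eq_abs, abs_of_pos hq0]; exact hq1
  have hgeo : HasSum (fun n : ℕ => q ^ n) (1 - q)⁻¹ :=
    hasSum_geometric_of_lt_one hq0.le hq1
  have hngeo : HasSum (fun n : ℕ => (n : ℝ) * q ^ n) (q / (1 - q) ^ 2) :=
    hasSum_coe_mul_geometric_of_norm_lt_one hq'
  have hch : HasSum (fun n : ℕ => (((n + 2).choose 2 : ℕ) : ℝ) * q ^ n) (1 / (1 - q) ^ 3) := by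
    have := hasSum_choose_mul_geometric_of_norm_lt_one (𝕜 := ℝ) 2 hq'
    exact this
  have hcast : ∀ n : ℕ, (((n + 2).choose 2 : ℕ) : ℝ) = ((n : ℝ) + 1) * ((n : ℝ) + 2) / 2 := by
    intro n
    have h2 : (n + 2).choose 2 * 2 = (n + 1) * (n + 2) := by
      rw [Nat.choose_two_right]
      have h1 : n + 2 - 1 = n + 1 := rfl
      have he : 2 ∣ (n + 2) * (n + 2 - 1) := by
        rw [h1, Nat.mul_comm]
        exact (Nat.even_mul_succ_self (n + 1)).two_dvd
      rw [Nat.div_mul_cancel he, h1]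
      ring
    have hc := congrArg (fun x : ℕ => (x : ℝ)) h2
    push_cast at hc
    linarith
  have h12 : HasSum (fun n : ℕ => ((n : ℝ) + 1) * ((n : ℝ) + 2) * q ^ n) (2 / (1 - q) ^ 3) := by
    have h := hch.mul_left 2
    have hfe : (fun n : ℕ => ((n : ℝ) + 1) * ((n : ℝ) + 2) * q ^ n)
        = fun n : ℕ => 2 * ((((n + 2).choose 2 : ℕ) : ℝ) * q ^ n) := funext fun n => by
      rw [hcast n]; ring
    rw [hfe, show (2:ℝ) / (1 - q) ^ 3 = 2 * (1 / (1 - q) ^ 3) from by ring]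
    exact h
  have hnn1 : HasSum (fun n : ℕ => (n : ℝ) * ((n : ℝ) + 1) * q ^ n) (q * (2 / (1 - q) ^ 3)) := by
    have hshift : HasSum (fun n : ℕ =>
        (fun n : ℕ => (n : ℝ) * ((n : ℝ) + 1) * q ^ n) (n + 1)) (q * (2 / (1 - q) ^ 3)) := by
      have h := h12.mul_left q
      have hfe : (fun n : ℕ => (fun n : ℕ => (n : ℝ) * ((n : ℝ) + 1) * q ^ n) (n + 1))
          = fun n : ℕ => q * (((n : ℝ) + 1) * ((n : ℝ) + 2) * q ^ n) := funext fun n => by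
        push_cast
        rw [pow_succ]
        ring
      rw [hfe]
      exact h
    have h := (hasSum_nat_add_iff (f := fun n : ℕ => (n : ℝ) * ((n : ℝ) + 1) * q ^ n) 1).1 hshift
    simpa using h
  -- grand real sum
  have hg : HasSum (fun n : ℕ => q ^ n * (1 - q) * (M2 + 2 * M1 * (n : ℝ) + (n : ℝ) * ((n : ℝ) + 1)))
      (M2 + 2 * M1 * (q / (1 - q)) + 2 * q / (1 - q) ^ 2) := by
    have h := ((hgeo.mul_left ((1 - q) * M2)).add (hngeo.mul_left (2 * M1 * (1 - q)))).add
      (hnn1.mul_left (1 - q))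
    have hfe : (fun n : ℕ => q ^ n * (1 - q) * (M2 + 2 * M1 * (n : ℝ) + (n : ℝ) * ((n : ℝ) + 1)))
        = fun n : ℕ => ((1 - q) * M2 * q ^ n + 2 * M1 * (1 - q) * ((n : ℝ) * q ^ n))
          + (1 - q) * ((n : ℝ) * ((n : ℝ) + 1) * q ^ n) := funext fun n => by ring
    have hv : M2 + 2 * M1 * (q / (1 - q)) + 2 * q / (1 - q) ^ 2
        = ((1 - q) * M2 * (1 - q)⁻¹ + 2 * M1 * (1 - q) * (q / (1 - q) ^ 2))
          + (1 - q) * (q * (2 / (1 - q) ^ 3)) := by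
      field_simp
    rw [hfe, hv]
    exact h
  -- ENNReal tsum
  have hterm : ∀ n : ℕ, μ (s (n+1)) * ∫⁻ ω, ENNReal.ofReal ((X ω + T (n+1) ω) ^ 2) ∂μ
      = ENNReal.ofReal (q ^ n * (1 - q) * (M2 + 2 * M1 * (n : ℝ) + (n : ℝ) * ((n : ℝ) + 1))) := by
    intro n
    rw [hμs n, Jval (n+1)]
    have hcard : (Finset.Ico 1 (n+1)).card = n := by
      rw [Nat.card_Ico]; omega
    rw [hcard]
    rw [ENNReal.ofReal_mul (mul_nonneg (by positivity) h1q.le)]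
    congr 1
    rw [ENNReal.ofReal_add (add_nonneg hM2nn (by positivity))
      (mul_nonneg (Nat.cast_nonneg n) (by positivity)),
      ENNReal.ofReal_add hM2nn (by positivity)]
    congr 1
    · congr 1
      rw [show (2:ℝ) * M1 * (n:ℝ) = (n:ℝ) * (2 * M1) from by ring,
        ENNReal.ofReal_mul (Nat.cast_nonneg n), ENNReal.ofReal_natCast,
        ENNReal.ofReal_mul (by norm_num), ENNReal.ofReal_ofNat]
    · rw [ENNReal.ofReal_mul (Nat.cast_nonneg n), ENNReal.ofReal_natCast,
        ENNReal.ofReal_add (Nat.cast_nonneg n) zero_le_one, ENNReal.ofReal_natCast,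
        ENNReal.ofReal_one]
  have htsum : ∑' m : ℕ, μ (s m) * ∫⁻ ω, ENNReal.ofReal ((X ω + T m ω) ^ 2) ∂μ
      = ENNReal.ofReal (M2 + 2 * M1 * (q / (1 - q)) + 2 * q / (1 - q) ^ 2) := by
    rw [tsum_eq_zero_add' ENNReal.summable, hs0, zero_mul, zero_add]
    rw [tsum_congr hterm, ← ENNReal.ofReal_tsum_of_nonneg
      (fun n => mul_nonneg (mul_nonneg (by positivity) h1q.le)
        (by positivity)) hg.summable, hg.tsum_eq]
  -- conclusion
  have hTotnn : 0 ≤ M2 + 2 * M1 * (q / (1 - q)) + 2 * q / (1 - q) ^ 2 := by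
    have : 0 ≤ q / (1 - q) := div_nonneg hq0.le h1q.le
    have h2 : 0 ≤ 2 * q / (1 - q) ^ 2 := by positivity
    nlinarith [hM1nn, hM2nn]
  have hkey : ∫ ω, (X ω + T (N ω) ω) ^ 2 ∂μ
      = M2 + 2 * M1 * (q / (1 - q)) + 2 * q / (1 - q) ^ 2 := by
    rw [integral_eq_lintegral_of_nonneg_ae (ae_of_all _ fun ω => sq_nonneg _)
      (mA.pow_const 2).aestronglyMeasurable]
    rw [hL, htsum, ENNReal.toReal_ofReal hTotnn]
  calc ∫ ω, (max γ (τ 0 ω) + ∑ k ∈ Finset.Ico 1 (N ω), τ k ω) ^ 2 ∂μ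
      = ∫ ω, (X ω + T (N ω) ω) ^ 2 ∂μ := rfl
    _ = M2 + 2 * M1 * (q / (1 - q)) + 2 * q / (1 - q) ^ 2 := hkey
    _ = γ ^ 2 + 2 * (γ + 1) * Real.exp (-γ)
        + 2 * (γ + Real.exp (-γ)) * q / (1 - q) + 2 * q / (1 - q) ^ 2 := by
      rw [hM2, hM1]; ring
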